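/- arXiv:2402.07798 — 2 statements merged into one kernel-verified Lean document; each statement's English description precedes it below -/
import Mathlib

section
/- For every integer n ≥ 2, λ_n = (s_0 s_1 ⋯ s_{n−1})^{n−1} in W̃_n, and this expression is reduced: the minimal number of simple reflections needed to write λ_n as a product of simple reflections is n(n−1). -/
/-- The affine reflection `((i,j))` of the affine symmetric group `W̃ₙ`, as a function
`ℤ → ℤ`: it interchanges `i + k*n` and `j + k*n` for every `k ∈ ℤ` and fixes all
integers not congruent to `i` or `j` mod `n`. -/
def affRefl (n : ℕ) (i j : ℤ) : ℤ → ℤ := fun k =>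
  if (k - i) % (n : ℤ) = 0 then k - i + j
  else if (k - j) % (n : ℤ) = 0 then k - j + i
  else k

/-- `t : ℤ → ℤ` is an affine reflection of `W̃ₙ`. -/
def IsAffRefl (n : ℕ) (t : ℤ → ℤ) : Prop :=
  ∃ i j : ℤ, (i - j) % (n : ℤ) ≠ 0 ∧ t = affRefl n i j

/-- The simple reflection `sⱼ = ((j, j+1))`. -/
def simpleRefl (n : ℕ) (j : ℤ) : ℤ → ℤ := affRefl n j (j + 1)

/-- The translation `λₙ`: it sends `k ≡ 0 (mod n)` to `k - n(n-1)` and all other `k`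
to `k + n`. -/
def lam (n : ℕ) : ℤ → ℤ := fun k =>
  if k % (n : ℤ) = 0 then k - (n : ℤ) * ((n : ℤ) - 1) else k + (n : ℤ)

/-- The product `r₁ r₂ ⋯ rₘ` of a list of elements, with `(w·v)(k) = w(v(k))`. -/
def listProd (l : List (ℤ → ℤ)) : ℤ → ℤ := l.foldr (· ∘ ·) id

/-- `l` is a factorization of `λₙ` into affine reflections. -/
def IsFactorization (n : ℕ) (l : List (ℤ → ℤ)) : Prop :=
  (∀ t ∈ l, IsAffRefl n t) ∧ listProd l = lam n

/-- A tree-like factorization of `λₙ`: a factorization `[r₁, …, r_{2n-2}]` into `2n-2`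
affine reflections such that there are integers `a₀, …, a_{2n-2}` and `b₁, …, b_{2n-2}`
with `r_k = ((a_{k-1}, b_k))`, `a_{k-1} < b_k` and `a_k ≡ b_k (mod n)`
(0-based: `r` at index `k` equals `((a k, b (k+1)))`). -/
def IsTreeLike (n : ℕ) (l : List (ℤ → ℤ)) : Prop :=
  IsFactorization n l ∧ l.length = 2 * n - 2 ∧
  ∃ a b : ℕ → ℤ, ∀ k : ℕ, ∀ h : k < l.length,
    l.get ⟨k, h⟩ = affRefl n (a k) (b (k + 1)) ∧
    a k < b (k + 1) ∧ (a (k + 1) - b (k + 1)) % (n : ℤ) = 0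

/-- `a₀ < a₁ < ⋯` is a strictly increasing endpoint sequence of the factorization `l`:
`r_ℓ = ((a_{ℓ-1}, a_ℓ))` (0-based: `r` at index `k` is `((a k, a (k+1)))`). -/
def EndSeq (n : ℕ) (l : List (ℤ → ℤ)) (a : ℕ → ℤ) : Prop :=
  ∀ k : ℕ, ∀ h : k < l.length,
    a k < a (k + 1) ∧ l.get ⟨k, h⟩ = affRefl n (a k) (a (k + 1))

/-- The representative of `x` modulo `n` lying in `{1, …, n}`. -/
def resOne (n : ℕ) (x : ℤ) : ℤ := if x % (n : ℤ) = 0 then (n : ℤ) else x % (n : ℤ)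

/-- `nb_k(r)` for the endpoint sequence `a` of a tree-like factorization of `λₙ`:
the list of the residues `a_i mod n` (representatives in `{1, …, n}`), in increasing
order of the index `i ∈ {1, …, 2n-2}`, over those `i` with `a_{i-1} ≡ k (mod n)`
(0-based: indices `i < 2n-2` with `a i ≡ k`, recording the residue of `a (i+1)`). -/
def nb (n : ℕ) (a : ℕ → ℤ) (k : ℤ) : List ℤ :=
  ((List.range (2 * n - 2)).filter (fun i => decide ((a i - k) % (n : ℤ) = 0))).map
    (fun i => resOne n (a (i + 1)))

/-- A cyclic factorization of `λₙ`: a tree-like factorization such that, for an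
endpoint sequence `a` as above, (i) `nb_n` is strictly increasing; and (ii) for each
`k ∈ {1, …, n-1}`, writing `nb_k = [c₁, …, c_ℓ]`, there is `j ∈ {1, …, ℓ}` with
`c_j < c_{j+1} < ⋯ < c_{ℓ-1} < k < c₁ < ⋯ < c_{j-1}`. -/
def IsCyclicFact (n : ℕ) (l : List (ℤ → ℤ)) : Prop :=
  IsTreeLike n l ∧
  ∃ a : ℕ → ℤ, EndSeq n l a ∧
    List.Chain' (· < ·) (nb n a (n : ℤ)) ∧
    (∀ k : ℤ, 1 ≤ k → k ≤ (n : ℤ) - 1 →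
      ∃ m : ℕ, m < (nb n a k).length ∧
        List.Chain' (· < ·)
          ((nb n a k).dropLast.drop m ++ k :: (nb n a k).dropLast.take m))

/-- The letter at (0-based) position `j` of the subword of `λ̂ₙ` with skip set `S`:
the identity `e` if `j` is a skip, and the simple reflection `sⱼ` otherwise. -/
def letterAt (n : ℕ) (S : Finset ℕ) (j : ℕ) : ℤ → ℤ :=
  if j ∈ S then id else simpleRefl n (j : ℤ)

/-- The subword of the word `λ̂ₙ = [s₀, s₁, …, s_{n-1}]^{n-1}` (of length `N = n(n-1)`,
whose letter at 0-based position `j` is `s_j`) with skip set `S`. -/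
def subword (n : ℕ) (S : Finset ℕ) : List (ℤ → ℤ) :=
  (List.range (n * (n - 1))).map (letterAt n S)

/-- `u_{(j)}`: the product of the first `j` letters of the subword. -/
def uPref (n : ℕ) (S : Finset ℕ) (j : ℕ) : ℤ → ℤ :=
  listProd ((subword n S).take j)

/-- `u_{(j)}⁻¹`: since every letter is an involution, the inverse of `u_{(j)}` is the
product of the first `j` letters in reverse order. -/
def uPrefInv (n : ℕ) (S : Finset ℕ) (j : ℕ) : ℤ → ℤ :=
  listProd (((subword n S).take j).reverse)

/-- The element `t_{j+1} = u_{(j)} s_j u_{(j)}⁻¹` of `inv(u)` (0-based `j`). -/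
def conjAt (n : ℕ) (S : Finset ℕ) (j : ℕ) : ℤ → ℤ :=
  uPref n S j ∘ simpleRefl n (j : ℤ) ∘ uPrefInv n S j

/-- The (0-based) skip indices of the subword, in increasing order. -/
def skipIdx (S : Finset ℕ) : List ℕ := S.sort (· ≤ ·)

/-- The sequence `r^u` of skip reflections of the subword with skip set `S`. -/
def skipRefls (n : ℕ) (S : Finset ℕ) : List (ℤ → ℤ) :=
  (skipIdx S).map (conjAt n S)

/-- The subword with skip set `S` is a member of `S_n`: it is a subword of `λ̂ₙ`
with exactly `2n-2` skips whose product is the identity. -/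
def SnMem (n : ℕ) (S : Finset ℕ) : Prop :=
  S ⊆ Finset.range (n * (n - 1)) ∧ S.card = 2 * n - 2 ∧ listProd (subword n S) = id

/-- The product of the suffix `r_{i+1} ⋯ r_m` (0-based: drops the first `i` factors). -/
def suffixProd (l : List (ℤ → ℤ)) (i : ℕ) : ℤ → ℤ := listProd (l.drop i)

/-- The cyclic segment product `u_{a+1} u_{a+2} ⋯ u_{a+L}` of the subword with skip set
`S` (0-based starting position `a`, indices taken modulo `N = n(n-1)`). -/
def segProd (n : ℕ) (S : Finset ℕ) (a L : ℕ) : ℤ → ℤ :=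
  listProd ((List.range L).map (fun t => letterAt n S ((a + t) % (n * (n - 1)))))

/-! ### Auxiliary lemmas for `stmt1` -/

section Stmt1Aux

private lemma listProd_cons' (x : ℤ → ℤ) (l : List (ℤ → ℤ)) :
    listProd (x :: l) = x ∘ listProd l := rfl

private lemma foldr_comp' : ∀ (l : List (ℤ → ℤ)) (g : ℤ → ℤ),
    List.foldr (· ∘ ·) g l = listProd l ∘ g
  | [], _ => rfl
  | x :: l, g => by
      rw [List.foldr_cons, foldr_comp' l g]; rfl

private lemma listProd_append' (l1 l2 : List (ℤ → ℤ)) :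
    listProd (l1 ++ l2) = listProd l1 ∘ listProd l2 := by
  unfold listProd
  rw [List.foldr_append]
  exact foldr_comp' l1 _

private lemma emod_reduce (N t x : ℤ) : (N * t + x) % N = x % N := by
  rw [Int.add_emod, Int.mul_emod_right, zero_add, Int.emod_emod_of_dvd _ dvd_rfl]

private lemma emod_neg_small {N x : ℤ} (h0 : -N ≤ x) (h1 : x < 0) : x % N = x + N := by
  have h := emod_reduce N 1 x
  have h2 : (N * 1 + x) % N = N * 1 + x := Int.emod_eq_of_lt (by omega) (by omega)
  calc x % N = (N * 1 + x) % N := h.symm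
    _ = N * 1 + x := h2
    _ = x + N := by ring

private lemma emod_zero_iff {N : ℤ} (hN : 0 < N) {x : ℤ} (h0 : -N < x) (h1 : x < N) :
    x % N = 0 ↔ x = 0 := by
  constructor
  · intro h
    obtain ⟨u, hu⟩ := Int.dvd_of_emod_eq_zero h
    rcases lt_trichotomy u 0 with h' | h' | h'
    · have hh : N * u ≤ N * (-1) := mul_le_mul_of_nonneg_left (by omega) hN.le
      linarith
    · rw [h', mul_zero] at hu; exact hu
    · have hh : N * 1 ≤ N * u := mul_le_mul_of_nonneg_left (by omega) hN.le
      linarith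
  · rintro rfl; simp

private lemma emod_zero_iff' {N : ℤ} (hN : 0 < N) {x : ℤ} (h0 : -2*N < x) (h1 : x < N) :
    x % N = 0 ↔ (x = 0 ∨ x = -N) := by
  constructor
  · intro h
    obtain ⟨u, hu⟩ := Int.dvd_of_emod_eq_zero h
    have hu1 : N * u < N * 1 := by linarith
    have hu2 : N * (-2) < N * u := by linarith
    have h3 : u < 1 := lt_of_mul_lt_mul_left hu1 hN.le
    have h4 : -2 < u := lt_of_mul_lt_mul_left hu2 hN.le
    interval_cases u
    · right; rw [hu]; ring
    · left; rw [hu]; ring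
  · rintro (rfl | rfl)
    · simp
    · rw [show -N = N * (-1) by ring]
      exact Int.mul_emod_right N (-1)

private lemma simpleRefl_apply (n : ℕ) (j k : ℤ) :
    simpleRefl n j k =
      if (k - j) % (n : ℤ) = 0 then k + 1
      else if (k - (j + 1)) % (n : ℤ) = 0 then k - 1 else k := by
  simp only [simpleRefl, affRefl]
  split_ifs <;> ring

private lemma simpleRefl_per (n : ℕ) (j k : ℤ) :
    simpleRefl n j (k + (n : ℤ)) = simpleRefl n j k + (n : ℤ) := by
  rw [simpleRefl_apply, simpleRefl_apply]
  rw [show k + (n:ℤ) - j = (n:ℤ) * 1 + (k - j) by ring, emod_reduce]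
  rw [show k + (n:ℤ) - (j + 1) = (n:ℤ) * 1 + (k - (j + 1)) by ring, emod_reduce]
  split_ifs <;> ring

private lemma simpleRefl_invol (n : ℕ) (hn : 2 ≤ n) (j k : ℤ) :
    simpleRefl n j (simpleRefl n j k) = k := by
  have hN2 : (2:ℤ) ≤ (n:ℤ) := by exact_mod_cast hn
  rw [simpleRefl_apply n j k]
  split_ifs with h1 h2
  · rw [simpleRefl_apply n j (k + 1)]
    have hA : (k + 1 - j) % (n:ℤ) = 1 := by
      obtain ⟨u, hu⟩ := Int.dvd_of_emod_eq_zero h1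
      rw [show k + 1 - j = (n:ℤ) * u + 1 by linarith, emod_reduce]
      exact Int.emod_eq_of_lt (by omega) (by omega)
    have hne : ¬ ((k + 1 - j) % (n:ℤ) = 0) := by rw [hA]; omega
    rw [if_neg hne, if_pos (show (k + 1 - (j+1)) % (n:ℤ) = 0 by
      rw [show k + 1 - (j+1) = k - j by ring]; exact h1)]
    ring
  · rw [simpleRefl_apply n j (k - 1)]
    rw [if_pos (show (k - 1 - j) % (n:ℤ) = 0 by
      rw [show k - 1 - j = k - (j+1) by ring]; exact h2)]
    ring
  · rw [simpleRefl_apply n j k, if_neg h1, if_neg h2]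

private lemma simpleRefl_inj (n : ℕ) (hn : 2 ≤ n) (j : ℤ) :
    Function.Injective (simpleRefl n j) :=
  Function.LeftInverse.injective (g := simpleRefl n j) (simpleRefl_invol n hn j)

private lemma s_move (n : ℕ) (j x : ℤ) :
    simpleRefl n j x = x + 1 ∨ simpleRefl n j x = x - 1 ∨ simpleRefl n j x = x := by
  rw [simpleRefl_apply]; split_ifs <;> simp

private lemma s_plus (n : ℕ) (j x : ℤ) (h : simpleRefl n j x = x + 1) :
    (x - j) % (n : ℤ) = 0 := by
  rw [simpleRefl_apply] at h
  split_ifs at h with h1 h2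
  · exact h1
  · omega
  · omega

private lemma bridge (n : ℕ) : ((List.range n).map (fun j => simpleRefl n (j : ℤ)))
    = (List.range n).map (fun j : ℕ => simpleRefl n (j : ℤ)) := by
  have h : ∀ l : List ℕ, ((l : List ℕ) >>= fun a => (pure ((a:ℤ)) : List ℤ))
      = l.map (fun a : ℕ => (a:ℤ)) := by
    intro l
    induction l with
    | nil => rfl
    | cons x l ih => simp_all [List.flatMap_cons]
  show List.map _ _ = _
  rw [show (do let a ← List.range n; pure ((a:ℤ)) : List ℤ)
      = (List.range n).map (fun a : ℕ => (a:ℤ)) from h _, List.map_map]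
  rfl

private lemma Q_formula (n : ℕ) (hn : 2 ≤ n) : ∀ m, m ≤ n → ∀ k : ℤ,
    listProd ((List.range m).map (fun j : ℕ => simpleRefl n (j : ℤ))) k =
      if k % (n:ℤ) = ((m:ℕ):ℤ) % (n:ℤ) then k - (m:ℤ)
      else if k % (n:ℤ) = (n:ℤ) - 1 ∧ m = n then k + 2
      else if k % (n:ℤ) < (m:ℤ) then k + 1 else k := by
  have hNpos : (0:ℤ) < (n:ℤ) := by exact_mod_cast (show 0 < n by omega)
  have hN2 : (2:ℤ) ≤ (n:ℤ) := by exact_mod_cast hn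
  intro m
  induction m with
  | zero =>
    intro _ k
    obtain ⟨c, hc, hc0, hcN⟩ : ∃ c, k % (n:ℤ) = c ∧ 0 ≤ c ∧ c < (n:ℤ) :=
      ⟨_, rfl, Int.emod_nonneg k (by omega), Int.emod_lt_of_pos k hNpos⟩
    simp only [List.range_zero, List.map_nil]
    show k = _
    have h00 : ((0:ℕ):ℤ) % (n:ℤ) = 0 := by simp
    rw [hc, h00]
    split_ifs <;> omega
  | succ m ih =>
    intro hm k
    have hmn : m < n := hm
    have hm' : m ≤ n := Nat.le_of_lt hmn
    have hmN : (m:ℤ) < (n:ℤ) := by exact_mod_cast hmn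
    have hsplit : listProd ((List.range (m+1)).map (fun j : ℕ => simpleRefl n (j : ℤ)))
        = listProd ((List.range m).map (fun j : ℕ => simpleRefl n (j : ℤ))) ∘ simpleRefl n (m:ℤ) := by
      rw [List.range_succ, List.map_append, listProd_append']
      rfl
    rw [hsplit, Function.comp_apply, simpleRefl_apply]
    obtain ⟨c, hc, hc0, hcN⟩ : ∃ c, k % (n:ℤ) = c ∧ 0 ≤ c ∧ c < (n:ℤ) :=
      ⟨_, rfl, Int.emod_nonneg k (by omega), Int.emod_lt_of_pos k hNpos⟩
    have hk : k = (n:ℤ) * (k / (n:ℤ)) + c := by rw [← hc]; exact (Int.mul_ediv_add_emod k (n:ℤ)).symm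
    have e1 : (k - (m:ℤ)) % (n:ℤ) = (c - (m:ℤ)) % (n:ℤ) := by
      rw [show k - (m:ℤ) = (n:ℤ) * (k / (n:ℤ)) + (c - (m:ℤ)) by linear_combination hk]
      exact emod_reduce _ _ _
    have e2 : (k - ((m:ℤ) + 1)) % (n:ℤ) = (c - (m:ℤ) - 1) % (n:ℤ) := by
      rw [show k - ((m:ℤ) + 1) = (n:ℤ) * (k / (n:ℤ)) + (c - (m:ℤ) - 1) by linear_combination hk]
      exact emod_reduce _ _ _
    have c1 : (c - (m:ℤ)) % (n:ℤ) = 0 ↔ c - (m:ℤ) = 0 :=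
      emod_zero_iff hNpos (by omega) (by omega)
    have c2 : (c - (m:ℤ) - 1) % (n:ℤ) = 0 ↔ (c - (m:ℤ) - 1 = 0 ∨ c - (m:ℤ) - 1 = -(n:ℤ)) :=
      emod_zero_iff' hNpos (by omega) (by omega)
    have E1 : ((m:ℕ):ℤ) % (n:ℤ) = (m:ℤ) := Int.emod_eq_of_lt (by omega) hmN
    rw [hc, e1, e2]
    by_cases h1 : c - (m:ℤ) = 0
    · rw [if_pos (c1.mpr h1), ih hm' (k+1)]
      have e3 : (k+1) % (n:ℤ) = (c+1) % (n:ℤ) := by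
        rw [show k + 1 = (n:ℤ) * (k / (n:ℤ)) + (c+1) by linear_combination hk]
        exact emod_reduce _ _ _
      by_cases h2 : c + 1 = (n:ℤ)
      · have e4 : (k+1) % (n:ℤ) = 0 := by rw [e3, h2, Int.emod_self]
        have E2 : ((m+1:ℕ):ℤ) % (n:ℤ) = 0 := by
          have hcast : ((m+1:ℕ):ℤ) = (n:ℤ) := by push_cast; omega
          rw [hcast, Int.emod_self]
        rw [e4, E1, E2]
        split_ifs <;> omega
      · have e4 : (k+1) % (n:ℤ) = c + 1 := by
          rw [e3]; exact Int.emod_eq_of_lt (by omega) (by omega)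
        have E2 : ((m+1:ℕ):ℤ) % (n:ℤ) = (m:ℤ) + 1 := by
          have hcast : ((m+1:ℕ):ℤ) = (m:ℤ) + 1 := by push_cast; ring
          rw [hcast]; exact Int.emod_eq_of_lt (by omega) (by omega)
        rw [e4, E1, E2]
        split_ifs <;> omega
    · rw [if_neg (fun h => h1 (c1.mp h))]
      by_cases h2 : c - (m:ℤ) - 1 = 0 ∨ c - (m:ℤ) - 1 = -(n:ℤ)
      · rw [if_pos (c2.mpr h2), ih hm' (k-1)]
        have e3 : (k-1) % (n:ℤ) = (c-1) % (n:ℤ) := by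
          rw [show k - 1 = (n:ℤ) * (k / (n:ℤ)) + (c-1) by linear_combination hk]
          exact emod_reduce _ _ _
        rcases h2 with h2 | h2
        · have e4 : (k-1) % (n:ℤ) = (m:ℤ) := by
            rw [e3, show c - 1 = (m:ℤ) by omega]
            exact Int.emod_eq_of_lt (by omega) hmN
          have E2 : ((m+1:ℕ):ℤ) % (n:ℤ) = (m:ℤ) + 1 := by
            have hcast : ((m+1:ℕ):ℤ) = (m:ℤ) + 1 := by push_cast; ring
            rw [hcast]; exact Int.emod_eq_of_lt (by omega) (by omega)
          rw [e4, E1, E2]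
          split_ifs <;> omega
        · have e4 : (k-1) % (n:ℤ) = (n:ℤ) - 1 := by
            rw [e3, show c - 1 = (-1:ℤ) by omega,
              show (-1:ℤ) % (n:ℤ) = -1 + (n:ℤ) from emod_neg_small (by omega) (by omega)]
            ring
          have E2 : ((m+1:ℕ):ℤ) % (n:ℤ) = 0 := by
            have hcast : ((m+1:ℕ):ℤ) = (n:ℤ) := by push_cast; omega
            rw [hcast, Int.emod_self]
          rw [e4, E1, E2]
          split_ifs <;> omega
      · rw [if_neg (fun h => h2 (c2.mp h)), ih hm' k, hc, E1]
        by_cases hm2 : m + 1 = n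
        · have E2 : ((m+1:ℕ):ℤ) % (n:ℤ) = 0 := by
            have hcast : ((m+1:ℕ):ℤ) = (n:ℤ) := by push_cast; omega
            rw [hcast, Int.emod_self]
          rw [E2]
          split_ifs <;> omega
        · have E2 : ((m+1:ℕ):ℤ) % (n:ℤ) = (m:ℤ) + 1 := by
            have hcast : ((m+1:ℕ):ℤ) = (m:ℤ) + 1 := by push_cast; ring
            rw [hcast]; exact Int.emod_eq_of_lt (by omega) (by omega)
          rw [E2]
          split_ifs <;> omega

private lemma P_formula (n : ℕ) (hn : 2 ≤ n) (k : ℤ) :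
    listProd ((List.range n).map (fun j : ℕ => simpleRefl n (j : ℤ))) k =
      if k % (n:ℤ) = 0 then k - (n:ℤ)
      else if k % (n:ℤ) = (n:ℤ) - 1 then k + 2 else k + 1 := by
  have hNpos : (0:ℤ) < (n:ℤ) := by exact_mod_cast (show 0 < n by omega)
  obtain ⟨c, hc, hc0, hcN⟩ : ∃ c, k % (n:ℤ) = c ∧ 0 ≤ c ∧ c < (n:ℤ) :=
    ⟨_, rfl, Int.emod_nonneg k (by omega), Int.emod_lt_of_pos k hNpos⟩
  rw [Q_formula n hn n le_rfl k, hc]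
  have E : ((n:ℕ):ℤ) % (n:ℤ) = 0 := Int.emod_self
  rw [E]
  split_ifs <;> omega

private lemma P_iter (n : ℕ) (hn : 2 ≤ n) : ∀ t, t ≤ n - 1 → ∀ k : ℤ,
    (listProd ((List.range n).map (fun j : ℕ => simpleRefl n (j : ℤ))))^[t] k =
      if k % (n:ℤ) = 0 then k - (t:ℤ) * (n:ℤ)
      else if (t:ℤ) + k % (n:ℤ) ≤ (n:ℤ) - 1 then k + (t:ℤ) else k + (t:ℤ) + 1 := by
  have hNpos : (0:ℤ) < (n:ℤ) := by exact_mod_cast (show 0 < n by omega)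
  have hN2 : (2:ℤ) ≤ (n:ℤ) := by exact_mod_cast hn
  intro t
  induction t with
  | zero =>
    intro _ k
    obtain ⟨c, hc, hc0, hcN⟩ : ∃ c, k % (n:ℤ) = c ∧ 0 ≤ c ∧ c < (n:ℤ) :=
      ⟨_, rfl, Int.emod_nonneg k (by omega), Int.emod_lt_of_pos k hNpos⟩
    rw [Function.iterate_zero_apply, hc]
    push_cast
    split_ifs <;> omega
  | succ t ih =>
    intro ht k
    have ht' : t ≤ n - 1 := by omega
    obtain ⟨c, hc, hc0, hcN⟩ : ∃ c, k % (n:ℤ) = c ∧ 0 ≤ c ∧ c < (n:ℤ) :=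
      ⟨_, rfl, Int.emod_nonneg k (by omega), Int.emod_lt_of_pos k hNpos⟩
    have hk : k = (n:ℤ) * (k / (n:ℤ)) + c := by rw [← hc]; exact (Int.mul_ediv_add_emod k (n:ℤ)).symm
    rw [Function.iterate_succ_apply', ih ht' k, hc]
    by_cases h1 : c = 0
    · simp only [if_pos h1]
      rw [P_formula n hn]
      have e4 : (k - (t:ℤ) * (n:ℤ)) % (n:ℤ) = 0 := by
        rw [show k - (t:ℤ) * (n:ℤ) = (n:ℤ) * (k / (n:ℤ) - (t:ℤ)) + c by linear_combination hk,
          emod_reduce, h1, Int.zero_emod]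
      rw [if_pos e4]
      push_cast
      ring
    · rw [if_neg h1, if_neg h1]
      by_cases h2 : (t:ℤ) + c ≤ (n:ℤ) - 1
      · rw [if_pos h2, P_formula n hn]
        have e3 : (k + (t:ℤ)) % (n:ℤ) = c + (t:ℤ) := by
          rw [show k + (t:ℤ) = (n:ℤ) * (k / (n:ℤ)) + (c + (t:ℤ)) by linear_combination hk,
            emod_reduce]
          exact Int.emod_eq_of_lt (by omega) (by omega)
        rw [e3]
        split_ifs <;> omega
      · rw [if_neg h2, P_formula n hn]
        have e3 : (k + (t:ℤ) + 1) % (n:ℤ) = c + (t:ℤ) + 1 - (n:ℤ) := by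
          rw [show k + (t:ℤ) + 1 = (n:ℤ) * (k / (n:ℤ) + 1) + (c + (t:ℤ) + 1 - (n:ℤ)) by
            linear_combination hk, emod_reduce]
          exact Int.emod_eq_of_lt (by omega) (by omega)
        rw [e3]
        split_ifs <;> omega

/-! Part 2 helpers -/

private lemma listProd_rep (n : ℕ) : ∀ (m : ℕ) (b : List ℤ),
    listProd (((List.replicate m b).flatten).map (simpleRefl n))
      = (listProd (b.map (simpleRefl n)))^[m]
  | 0, _ => rfl
  | m+1, b => by
    rw [List.replicate_succ, List.flatten_cons, List.map_append, listProd_append',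
      listProd_rep n m b]
    exact (Function.iterate_succ' _ _).symm

private lemma length_rep : ∀ (m : ℕ) (b : List ℤ),
    ((List.replicate m b).flatten).length = m * b.length
  | 0, _ => by simp
  | m+1, b => by
    rw [List.replicate_succ, List.flatten_cons, List.length_append, length_rep m b]
    ring

/-! Part 3: inversion counting -/

private noncomputable def InvBox (n : ℕ) (B : ℤ) (w : ℤ → ℤ) : Finset (ℤ × ℤ) :=
  ((Finset.Icc 1 (n:ℤ)) ×ˢ (Finset.Icc 1 B)).filter (fun p => p.1 < p.2 ∧ w p.2 < w p.1)

private lemma per_int (n : ℕ) (w : ℤ → ℤ) (hper : ∀ k, w (k + (n:ℤ)) = w k + (n:ℤ)) :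
    ∀ (t : ℤ) (k : ℤ), w (k + (n:ℤ) * t) = w k + (n:ℤ) * t := by
  have hper' : ∀ x, w (x - (n:ℤ)) = w x - (n:ℤ) := by
    intro x
    have h2 := hper (x - (n:ℤ))
    have h3 : x - (n:ℤ) + (n:ℤ) = x := by ring
    rw [h3] at h2
    linarith
  intro t
  induction t using Int.induction_on with
  | zero => intro k; simp
  | succ i ihh =>
    intro k
    rw [show k + (n:ℤ) * ((i:ℤ) + 1) = (k + (n:ℤ) * (i:ℤ)) + (n:ℤ) by ring, hper, ihh]
    ring
  | pred i ihh =>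
    intro k
    rw [show k + (n:ℤ) * (-(i:ℤ) - 1) = (k + (n:ℤ) * (-(i:ℤ))) - (n:ℤ) by ring, hper', ihh]
    ring

private lemma listProd_word_inj_per (n : ℕ) (hn : 2 ≤ n) : ∀ l : List ℤ,
    Function.Injective (listProd (l.map (simpleRefl n))) ∧
    (∀ k, listProd (l.map (simpleRefl n)) (k + (n:ℤ)) = listProd (l.map (simpleRefl n)) k + (n:ℤ))
  | [] => ⟨fun _ _ h => h, fun _ => rfl⟩
  | j :: l => by
    obtain ⟨h1, h2⟩ := listProd_word_inj_per n hn l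
    constructor
    · exact (simpleRefl_inj n hn j).comp h1
    · intro k
      show simpleRefl n j (listProd (l.map (simpleRefl n)) (k + (n:ℤ))) = _
      rw [h2]
      exact simpleRefl_per n j _

private lemma invbox_step (n : ℕ) (hn : 2 ≤ n) (B : ℤ) (j : ℤ) (w : ℤ → ℤ)
    (hinj : Function.Injective w) (hper : ∀ k, w (k + (n:ℤ)) = w k + (n:ℤ)) :
    (InvBox n B (simpleRefl n j ∘ w)).card ≤ (InvBox n B w).card + 1 := by
  have hNpos : (0:ℤ) < (n:ℤ) := by exact_mod_cast (show 0 < n by omega)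
  set A := InvBox n B (simpleRefl n j ∘ w) with hA
  set C := InvBox n B w with hC
  have key : ∀ p : ℤ × ℤ, p ∈ A \ C →
      1 ≤ p.1 ∧ p.1 ≤ (n:ℤ) ∧ w p.2 = w p.1 + 1 ∧ (w p.1 - j) % (n:ℤ) = 0 := by
    intro p hp
    rw [Finset.mem_sdiff] at hp
    obtain ⟨hpA, hpC⟩ := hp
    rw [hA] at hpA
    rw [hC] at hpC
    simp only [InvBox, Finset.mem_filter, Finset.mem_product, Finset.mem_Icc,
      Function.comp_apply] at hpA hpC
    obtain ⟨⟨⟨hp11, hp12⟩, hp21, hp22⟩, hplt, hps⟩ := hpA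
    have hnotlt : ¬ (w p.2 < w p.1) := fun h => hpC ⟨⟨⟨hp11, hp12⟩, hp21, hp22⟩, hplt, h⟩
    have hne : w p.1 ≠ w p.2 := fun h => absurd (hinj h) (ne_of_lt hplt)
    have m1 := s_move n j (w p.1)
    have m2 := s_move n j (w p.2)
    have hb1 : w p.2 = w p.1 + 1 := by omega
    have hb2 : simpleRefl n j (w p.1) = w p.1 + 1 := by omega
    exact ⟨hp11, hp12, hb1, s_plus n j (w p.1) hb2⟩
  have hone : (A \ C).card ≤ 1 := by
    rw [Finset.card_le_one]
    intro p hp q hq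
    obtain ⟨hp1, hp2, hpw, hpj⟩ := key p hp
    obtain ⟨hq1, hq2, hqw, hqj⟩ := key q hq
    obtain ⟨u, hu⟩ := Int.dvd_of_emod_eq_zero hpj
    obtain ⟨v, hv⟩ := Int.dvd_of_emod_eq_zero hqj
    have hper' := per_int n w hper (u - v) q.1
    have heq : w p.1 = w (q.1 + (n:ℤ) * (u - v)) := by
      rw [hper']; linear_combination hu - hv
    have h1 : p.1 = q.1 + (n:ℤ) * (u - v) := hinj heq
    have hd : u - v = 0 := by
      rcases lt_trichotomy (u - v) 0 with h | h | h
      · have hh : (n:ℤ) * (u - v) ≤ (n:ℤ) * (-1) := mul_le_mul_of_nonneg_left (by omega) hNpos.le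
        linarith
      · exact h
      · have hh : (n:ℤ) * 1 ≤ (n:ℤ) * (u - v) := mul_le_mul_of_nonneg_left (by omega) hNpos.le
        linarith
    have hpq1 : p.1 = q.1 := by rw [hd, mul_zero, add_zero] at h1; exact h1
    have hpq2 : p.2 = q.2 := hinj (by rw [hpw, hqw, hpq1])
    exact Prod.ext hpq1 hpq2
  calc A.card ≤ ((A ∩ C) ∪ (A \ C)).card := by
        apply Finset.card_le_card
        intro p hp
        by_cases h : p ∈ C
        · exact Finset.mem_union_left _ (Finset.mem_inter.mpr ⟨hp, h⟩)
        · exact Finset.mem_union_right _ (Finset.mem_sdiff.mpr ⟨hp, h⟩)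
    _ ≤ (A ∩ C).card + (A \ C).card := Finset.card_union_le _ _
    _ ≤ C.card + 1 := Nat.add_le_add (Finset.card_le_card Finset.inter_subset_right) hone

private lemma invbox_le (n : ℕ) (hn : 2 ≤ n) (B : ℤ) : ∀ w : List ℤ,
    (InvBox n B (listProd (w.map (simpleRefl n)))).card ≤ w.length := by
  intro w
  induction w with
  | nil =>
    have hid : InvBox n B (listProd (List.map (simpleRefl n) [])) = ∅ := by
      unfold InvBox
      apply Finset.filter_eq_empty_iff.mpr
      intro p _
      rintro ⟨h1, h2⟩
      simp only [List.map_nil] at h2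
      have : p.2 < p.1 := h2
      omega
    rw [hid]
    simp
  | cons j l ihl =>
    have hrw : listProd ((j :: l).map (simpleRefl n))
        = simpleRefl n j ∘ listProd (l.map (simpleRefl n)) := rfl
    rw [hrw]
    calc (InvBox n B (simpleRefl n j ∘ listProd (l.map (simpleRefl n)))).card
        ≤ (InvBox n B (listProd (l.map (simpleRefl n)))).card + 1 :=
          invbox_step n hn B j _ (listProd_word_inj_per n hn l).1 (listProd_word_inj_per n hn l).2
      _ ≤ l.length + 1 := by omega
      _ = (j :: l).length := by simp

private lemma lam_lb (n : ℕ) (hn : 2 ≤ n) :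
    n * (n - 1) ≤ (InvBox n ((n:ℤ) * (n:ℤ)) (lam n)).card := by
  have hNpos : (0:ℤ) < (n:ℤ) := by exact_mod_cast (show 0 < n by omega)
  have hN2 : (2:ℤ) ≤ (n:ℤ) := by exact_mod_cast hn
  have hmem : ∀ p ∈ (Finset.Icc (1:ℤ) ((n:ℤ) - 1)) ×ˢ (Finset.Icc (1:ℤ) (n:ℤ)),
      (fun p : ℤ × ℤ => (p.1, p.2 * (n:ℤ))) p ∈ InvBox n ((n:ℤ) * (n:ℤ)) (lam n) := by
    intro p hp
    simp only [Finset.mem_product, Finset.mem_Icc] at hp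
    obtain ⟨⟨h11, h12⟩, h21, h22⟩ := hp
    have hv1 : lam n p.1 = p.1 + (n:ℤ) := by
      simp only [lam]
      rw [show p.1 % (n:ℤ) = p.1 from Int.emod_eq_of_lt (by omega) (by omega)]
      rw [if_neg (by omega)]
    have hz : (p.2 * (n:ℤ)) % (n:ℤ) = 0 := by
      rw [mul_comm]; exact Int.mul_emod_right (n:ℤ) p.2
    have hv2 : lam n (p.2 * (n:ℤ)) = p.2 * (n:ℤ) - (n:ℤ) * ((n:ℤ) - 1) := by
      simp only [lam]
      rw [hz, if_pos rfl]
    simp only [InvBox, Finset.mem_filter, Finset.mem_product, Finset.mem_Icc]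
    refine ⟨⟨⟨by omega, by omega⟩, ?_, ?_⟩, ?_, ?_⟩
    · nlinarith
    · nlinarith
    · nlinarith
    · show lam n (p.2 * (n:ℤ)) < lam n p.1
      rw [hv1, hv2]
      nlinarith
  have hinj : Set.InjOn (fun p : ℤ × ℤ => (p.1, p.2 * (n:ℤ)))
      ↑((Finset.Icc (1:ℤ) ((n:ℤ) - 1)) ×ˢ (Finset.Icc (1:ℤ) (n:ℤ))) := by
    intro p _ q _ h
    simp only [Prod.mk.injEq] at h
    obtain ⟨h1, h2⟩ := h
    have h3 : p.2 = q.2 := mul_right_cancel₀ (by omega) h2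
    exact Prod.ext h1 h3
  have hcard : ((Finset.Icc (1:ℤ) ((n:ℤ) - 1)) ×ˢ (Finset.Icc (1:ℤ) (n:ℤ))).card = n * (n - 1) := by
    rw [Finset.card_product, Int.card_Icc, Int.card_Icc]
    have e1 : ((n:ℤ) - 1 + 1 - 1).toNat = n - 1 := by omega
    have e2 : ((n:ℤ) + 1 - 1).toNat = n := by omega
    rw [e1, e2, Nat.mul_comm]
  calc n * (n - 1) = _ := hcard.symm
    _ ≤ _ := Finset.card_le_card_of_injOn _ hmem hinj

end Stmt1Aux

/-- `λₙ = (s₀ s₁ ⋯ s_{n-1})^{n-1}`, and this expression is reduced: the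
minimal number of simple reflections needed to write `λₙ` is `n(n-1)`. -/
theorem stmt1 (n : ℕ) (hn : 2 ≤ n) :
    (listProd ((List.range n).map (fun j => simpleRefl n (j : ℤ))))^[n - 1] = lam n ∧
    (∃ w : List ℤ, w.length = n * (n - 1) ∧ listProd (w.map (simpleRefl n)) = lam n) ∧
    (∀ w : List ℤ, listProd (w.map (simpleRefl n)) = lam n → n * (n - 1) ≤ w.length) := by
  have hNpos : (0:ℤ) < (n:ℤ) := by exact_mod_cast (show 0 < n by omega)
  have part1 : (listProd ((List.range n).map (fun j => simpleRefl n (j : ℤ))))^[n - 1] = lam n := by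
    rw [bridge n]
    funext k
    obtain ⟨c, hc, hc0, hcN⟩ : ∃ c, k % (n:ℤ) = c ∧ 0 ≤ c ∧ c < (n:ℤ) :=
      ⟨_, rfl, Int.emod_nonneg k (by omega), Int.emod_lt_of_pos k hNpos⟩
    rw [P_iter n hn (n-1) le_rfl k]
    simp only [lam]
    rw [hc]
    have hcast : ((n-1:ℕ):ℤ) = (n:ℤ) - 1 := by omega
    split_ifs with h1 h2
    · rw [hcast]; ring
    · omega
    · omega
  refine ⟨part1, ⟨(List.replicate (n-1) ((List.range n).map (fun j : ℕ => (j:ℤ)))).flatten,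
    ?_, ?_⟩, ?_⟩
  · rw [length_rep]
    have : ((List.range n).map (fun j : ℕ => (j:ℤ))).length = n := by simp
    rw [this, Nat.mul_comm]
  · have hmap : ((List.range n).map (fun j : ℕ => (j:ℤ))).map (simpleRefl n)
        = (List.range n).map (fun j => simpleRefl n (j : ℤ)) := by
      rw [bridge n, List.map_map]
      rfl
    rw [listProd_rep, hmap, part1]
  · intro w hw
    have h1 := invbox_le n hn ((n:ℤ) * (n:ℤ)) w
    rw [hw] at h1
    exact le_trans (lam_lb n hn) h1
end

section
/- Let n ≥ 2 and let r = [r_1, …, r_{2n−2}] be a tree-like factorization of λ_n. Then there exist integers a_0 < a_1 < ⋯ < a_{2n−2} with r_ℓ = ((a_{ℓ−1}, a_ℓ)) for all ℓ, and for any such integers one has a_0 ≡ 0 (mod n) and a_{2n−2} ≡ 0 (mod n). -/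
section Stmt3Aux

private lemma emod_sub_right' {n a b : ℤ} (h : a % n = 0) : (b - a) % n = b % n := by
  obtain ⟨t, ht⟩ := Int.dvd_of_emod_eq_zero h
  subst ht
  have := Int.add_mul_emod_self_left b n (-t)
  simpa [mul_neg, ← sub_eq_add_neg] using this

private lemma emod_add_right' {n a b : ℤ} (h : a % n = 0) : (b + a) % n = b % n := by
  obtain ⟨t, ht⟩ := Int.dvd_of_emod_eq_zero h
  subst ht
  exact Int.add_mul_emod_self_left _ _ _

private lemma emod_neg_zero {n a : ℤ} (h : a % n = 0) : (-a) % n = 0 := by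
  obtain ⟨t, ht⟩ := Int.dvd_of_emod_eq_zero h
  subst ht
  rw [← mul_neg]
  exact Int.mul_emod_right _ _

private lemma affRefl_shift (n : ℕ) (i j c : ℤ) (hc : c % (n : ℤ) = 0) :
    affRefl n (i + c) (j + c) = affRefl n i j := by
  funext x
  unfold affRefl
  have h1 : (x - (i + c)) % (n : ℤ) = (x - i) % (n : ℤ) := by
    have e : x - (i + c) = (x - i) - c := by ring
    rw [e, emod_sub_right' hc]
  have h2 : (x - (j + c)) % (n : ℤ) = (x - j) % (n : ℤ) := by
    have e : x - (j + c) = (x - j) - c := by ring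
    rw [e, emod_sub_right' hc]
  rw [h1, h2]
  split_ifs <;> ring

private lemma affRefl_invol (n : ℕ) {i j : ℤ} (h : (i - j) % (n : ℤ) ≠ 0) (x : ℤ) :
    affRefl n i j (affRefl n i j x) = x := by
  have hji : (j - i) % (n : ℤ) ≠ 0 := by
    intro hc
    apply h
    have : i - j = -(j - i) := by ring
    rw [this]
    exact emod_neg_zero hc
  by_cases h1 : (x - i) % (n : ℤ) = 0
  · have v1 : affRefl n i j x = x - i + j := by simp [affRefl, h1]
    rw [v1]
    have c1 : (x - i + j - i) % (n : ℤ) ≠ 0 := by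
      have e : x - i + j - i = (j - i) + (x - i) := by ring
      rw [e, emod_add_right' h1]
      exact hji
    have c2 : (x - i + j - j) % (n : ℤ) = 0 := by
      have e : x - i + j - j = x - i := by ring
      rw [e]; exact h1
    simp only [affRefl, c1, c2, if_false, if_true]
    ring
  · by_cases h2 : (x - j) % (n : ℤ) = 0
    · have v1 : affRefl n i j x = x - j + i := by simp [affRefl, h1, h2]
      rw [v1]
      have c1 : (x - j + i - i) % (n : ℤ) = 0 := by
        have e : x - j + i - i = x - j := by ring
        rw [e]; exact h2
      simp only [affRefl, c1, if_true]
      ring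
    · simp [affRefl, h1, h2]

/-- From an endpoint pair of a genuine affine reflection, the endpoints are
incongruent mod n. -/
private lemma endpoints_incong (n : ℕ) {t : ℤ → ℤ} (ht : IsAffRefl n t)
    {p q : ℤ} (hpq : p < q) (heq : t = affRefl n p q) :
    (q - p) % (n : ℤ) ≠ 0 := by
  intro hc
  obtain ⟨i, j, hij, hij'⟩ := ht
  have hinv : ∀ x, affRefl n p q (affRefl n p q x) = x := by
    intro x
    rw [← heq, hij']
    exact affRefl_invol n hij x
  have hcp : (p - q) % (n : ℤ) = 0 := by
    have : p - q = -(q - p) := by ring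
    rw [this]; exact emod_neg_zero hc
  have v1 : affRefl n p q p = q := by
    simp [affRefl]
  have v2 : affRefl n p q q = q - p + q := by
    have c1 : (q - p) % (n : ℤ) = 0 := hc
    simp only [affRefl, c1, if_true]
  have := hinv p
  rw [v1, v2] at this
  omega

private lemma affRefl_apply_right (n : ℕ) {p q : ℤ} (h : (q - p) % (n : ℤ) ≠ 0) :
    affRefl n p q q = p := by
  simp only [affRefl, h, if_false]
  simp

end Stmt3Aux

/-- Every tree-like factorization of `λₙ` has a strictly increasing
endpoint sequence `a₀ < a₁ < ⋯ < a_{2n-2}` with `r_ℓ = ((a_{ℓ-1}, a_ℓ))`, and for any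
such sequence `a₀ ≡ 0 (mod n)` and `a_{2n-2} ≡ 0 (mod n)`. -/
theorem stmt3 (n : ℕ) (hn : 2 ≤ n) (l : List (ℤ → ℤ)) (h : IsTreeLike n l) :
    (∃ a : ℕ → ℤ, EndSeq n l a) ∧
    (∀ a : ℕ → ℤ, EndSeq n l a →
      a 0 % (n : ℤ) = 0 ∧ a l.length % (n : ℤ) = 0) := by
  obtain ⟨⟨hrefl, hprod⟩, hlen, a, b, hab⟩ := h
  have hm1 : 1 ≤ l.length := by omega
  constructor
  · -- existence of an endpoint sequence
    set c : ℕ → ℤ := fun k => Nat.rec (a 0) (fun k ck => b (k + 1) + (ck - a k)) k with hc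
    have hcsucc : ∀ k : ℕ, c (k + 1) = b (k + 1) + (c k - a k) := fun k => rfl
    have hc0 : c 0 = a 0 := rfl
    have hmod : ∀ k : ℕ, k ≤ l.length → (c k - a k) % (n : ℤ) = 0 := by
      intro k
      induction k with
      | zero => intro _; simp [hc0]
      | succ k ih =>
        intro hk
        have hk' : k < l.length := by omega
        obtain ⟨_, _, hmd⟩ := hab k hk'
        have ihk := ih (by omega)
        rw [hcsucc]
        have e : b (k + 1) + (c k - a k) - a (k + 1) =
            (c k - a k) - (a (k + 1) - b (k + 1)) := by ring
        rw [e, emod_sub_right' hmd]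
        exact ihk
    refine ⟨c, ?_⟩
    intro k hk
    obtain ⟨hget, hlt, _⟩ := hab k hk
    have hd : (c k - a k) % (n : ℤ) = 0 := hmod k (le_of_lt hk)
    constructor
    · rw [hcsucc]; omega
    · rw [hget]
      obtain ⟨t, ht⟩ := Int.dvd_of_emod_eq_zero hd
      have e1 : c k = a k + (n : ℤ) * t := by omega
      have e2 : c (k + 1) = b (k + 1) + (n : ℤ) * t := by rw [hcsucc]; omega
      rw [e1, e2]
      exact (affRefl_shift n (a k) (b (k + 1)) ((n : ℤ) * t) (Int.mul_emod_right _ _)).symm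
  · intro a' ha'
    -- incongruence of consecutive endpoints
    have hnc : ∀ k : ℕ, k < l.length → (a' (k + 1) - a' k) % (n : ℤ) ≠ 0 := by
      intro k hk
      obtain ⟨hlt, hget⟩ := ha' k hk
      exact endpoints_incong n (hrefl _ (l.get_mem ⟨k, hk⟩)) hlt hget
    -- suffix products
    have hsuf : ∀ j : ℕ, j ≤ l.length →
        listProd (l.drop (l.length - j)) (a' l.length) = a' (l.length - j) := by
      intro j
      induction j with
      | zero =>
        intro _
        simp [listProd, List.drop_length]
      | succ j ih =>
        intro hj
        have hi : l.length - (j + 1) < l.length := by omega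
        have hi1 : l.length - (j + 1) + 1 = l.length - j := by omega
        have hdrop : l.drop (l.length - (j + 1)) =
            l.get ⟨l.length - (j + 1), hi⟩ :: l.drop (l.length - (j + 1) + 1) := by
          rw [List.drop_eq_getElem_cons hi]
          rfl
        rw [hdrop]
        have : listProd (l.get ⟨l.length - (j+1), hi⟩ :: l.drop (l.length - (j + 1) + 1)) =
            l.get ⟨l.length - (j+1), hi⟩ ∘ listProd (l.drop (l.length - (j + 1) + 1)) := rfl
        rw [this]
        have ihj := ih (by omega)
        simp only [Function.comp_apply]
        rw [hi1, ihj]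
        obtain ⟨_, hget⟩ := ha' (l.length - (j + 1)) hi
        rw [hget, ← hi1]
        exact affRefl_apply_right n (hnc _ hi)
    have hfull := hsuf l.length le_rfl
    simp only [Nat.sub_self, List.drop_zero] at hfull
    rw [hprod] at hfull
    -- a' 0 < a' l.length
    have hmono : ∀ j : ℕ, j ≤ l.length → a' 0 ≤ a' j := by
      intro j
      induction j with
      | zero => intro _; exact le_refl _
      | succ j ih =>
        intro hj
        have := (ha' j (by omega)).1
        have := ih (by omega)
        omega
    have hlt0 : a' 0 < a' l.length := by
      have h1 := hmono (l.length - 1) (by omega)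
      have h2 := (ha' (l.length - 1) (by omega)).1
      have : l.length - 1 + 1 = l.length := by omega
      rw [this] at h2
      omega
    -- analyze lam
    by_cases hc : a' l.length % (n : ℤ) = 0
    · have : lam n (a' l.length) = a' l.length - (n : ℤ) * ((n : ℤ) - 1) := by
        simp [lam, hc]
      rw [this] at hfull
      constructor
      · rw [← hfull]
        have e : a' l.length - (n : ℤ) * ((n : ℤ) - 1) =
            a' l.length - (n : ℤ) * ((n : ℤ) - 1) := rfl
        have : (((n : ℤ)) * ((n : ℤ) - 1)) % (n : ℤ) = 0 := Int.mul_emod_right _ _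
        rw [emod_sub_right' this]
        exact hc
      · exact hc
    · exfalso
      have : lam n (a' l.length) = a' l.length + (n : ℤ) := by simp [lam, hc]
      rw [this] at hfull
      have hn0 : (0 : ℤ) < (n : ℤ) := by positivity
      omega
end
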